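/- For every c > 0 and every n ≥ 3, the linear diffeomorphism φ_c : ℝⁿ → ℝⁿ, φ_c(x₀,x₁,x₂,…,x_{n−1}) = (c²x₀, cx₁, cx₂, …, cx_{n−1}), whose derivative at every point is the diagonal matrix D = diag(c², c, …, c), satisfies D · G¹ₙ(φ_c(x)) · D = c² · G^cₙ(x) for every x ∈ ℝⁿ; i.e. g^cₙ = (1/c²)·φ_c*(g¹ₙ), so that c²·g^cₙ is isometric to g¹ₙ. -/
import Mathlib


/-- The matrix representing the Lorentzian metric `g^c₃` on `ℝ³`. -/
noncomputable def Gc3 (c : ℝ) (x : Fin 3 → ℝ) : Matrix (Fin 3) (Fin 3) ℝ :=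
  !![-c^2, -c^2 * x 2, 0;
     -c^2 * x 2, 1 - c^2 * (x 2)^2, 0;
     0, 0, 1]

/-- The matrix representing the Lorentzian metric `g^cₙ` on `ℝⁿ` (`n ≥ 3`):
block diagonal with upper-left `3×3` block `Gc3` and lower-right block the identity. -/
noncomputable def Gcn (c : ℝ) (n : ℕ) (hn : 3 ≤ n) (x : Fin n → ℝ) :
    Matrix (Fin n) (Fin n) ℝ := fun i j =>
  if hi : (i : ℕ) < 3 then
    if hj : (j : ℕ) < 3 then
      Gc3 c (fun k => x (Fin.castLE hn k)) ⟨i, hi⟩ ⟨j, hj⟩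
    else 0
  else if i = j then 1 else 0

/-- The linear diffeomorphism `φ_c(x₀,x₁,…) = (c²x₀, cx₁, …, cx_{n-1})`. -/
noncomputable def phi (c : ℝ) (n : ℕ) (x : Fin n → ℝ) : Fin n → ℝ :=
  fun i => (if (i : ℕ) = 0 then c^2 else c) * x i

/-- `D · G¹ₙ(φ_c(x)) · D = c² · G^cₙ(x)`, where
`D = diag(c², c, …, c)` is the derivative of `φ_c`; i.e.
`g^cₙ = (1/c²)·φ_c*(g¹ₙ)`, so `c²·g^cₙ` is isometric to `g¹ₙ`. -/
theorem stmt_0 (c : ℝ) (hc : 0 < c) (n : ℕ) (hn : 3 ≤ n) (x : Fin n → ℝ)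
    (D : Matrix (Fin n) (Fin n) ℝ)
    (hD : D = Matrix.diagonal (fun i : Fin n => if (i : ℕ) = 0 then c^2 else c)) :
    D * Gcn 1 n hn (phi c n x) * D = c^2 • Gcn c n hn x := by
  subst hD
  ext i j
  rw [Matrix.mul_diagonal, Matrix.diagonal_mul, Matrix.smul_apply, smul_eq_mul]
  have key : Gcn 1 n hn (phi c n x) i j =
      if hi : (i : ℕ) < 3 then
        if hj : (j : ℕ) < 3 then
          Gc3 1 (fun k => phi c n x (Fin.castLE hn k)) ⟨i, hi⟩ ⟨j, hj⟩
        else 0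
      else if i = j then 1 else 0 := rfl
  rw [key]
  show _ = c ^ 2 * (if hi : (i : ℕ) < 3 then
        if hj : (j : ℕ) < 3 then
          Gc3 c (fun k => x (Fin.castLE hn k)) ⟨i, hi⟩ ⟨j, hj⟩
        else 0
      else if i = j then 1 else 0)
  by_cases hi : (i : ℕ) < 3 <;> by_cases hj : (j : ℕ) < 3 <;>
    simp only [hi, hj, dif_pos, dif_neg, not_false_iff]
  · -- both < 3
    have hp : ∀ k : Fin 3, phi c n x (Fin.castLE hn k) =
        (if (k : ℕ) = 0 then c^2 else c) * x (Fin.castLE hn k) := fun k => rfl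
    interval_cases hi' : (i : ℕ) <;> interval_cases hj' : (j : ℕ) <;>
      simp_all [Gc3, phi, Fin.castLE, hi', hj'] <;> ring
  · have hne : i ≠ j := by intro h; subst h; omega
    simp [hne]
  · have hne : i ≠ j := by intro h; subst h; omega
    simp [hne]
  · by_cases h : i = j
    · have h0 : (j:ℕ) ≠ 0 := by omega
      simp [h, h0]; ring
    · simp [h]
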